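/- Let n ≥ 3 and 1 ≤ d < n. Then β_n^d = ∑_{m | n, m ≥ 1} μ(n/m) · α_m^d, where the sum runs over all positive divisors m of n and μ is the Möbius function. -/

import Mathlib

/-- A tuple `v : Fin d → ZMod n` is zero-sum-free if no non-empty subset of its
components sums to zero in `ZMod n`. -/
def ZeroSumFree {n d : ℕ} (v : Fin d → ZMod n) : Prop :=
  ∀ S : Finset (Fin d), S.Nonempty → ∑ i ∈ S, v i ≠ 0

/-- `alphaZSF n d` is the number of zero-sum-free `d`-tuples in `(ZMod n)^d`. -/
noncomputable def alphaZSF (n d : ℕ) : ℕ :=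
  Nat.card {v : Fin d → ZMod n // ZeroSumFree v}

/-- A tuple is irreducible if `gcd(v₁, ..., v_d, n) = 1`, where components are
identified with their representatives in `{0, 1, ..., n-1}`. -/
def IrreducibleTuple {n d : ℕ} (v : Fin d → ZMod n) : Prop :=
  Nat.gcd (Finset.univ.gcd fun i => (v i).val) n = 1

/-- `betaZSF n d` is the number of irreducible zero-sum-free `d`-tuples in `(ZMod n)^d`. -/
noncomputable def betaZSF (n d : ℕ) : ℕ :=
  Nat.card {v : Fin d → ZMod n // ZeroSumFree v ∧ IrreducibleTuple v}

open Finset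

private lemma zsf_cast_zero_iff {n m g : ℕ} (hgm : g * m = n) (hn : 0 < n) (k : ℕ) :
    ((g * k : ℕ) : ZMod n) = 0 ↔ ((k : ℕ) : ZMod m) = 0 := by
  have hg : 0 < g := by
    rcases Nat.eq_zero_or_pos g with h | h
    · simp [h] at hgm; omega
    · exact h
  rw [ZMod.natCast_eq_zero_iff, ZMod.natCast_eq_zero_iff, ← hgm,
    Nat.mul_dvd_mul_iff_left hg]

private lemma zsf_lift {n m g d : ℕ} (hgm : g * m = n) (hn : 0 < n)
    (w : Fin d → ZMod m) :
    ZeroSumFree (fun j => ((g * (w j).val : ℕ) : ZMod n)) ↔ ZeroSumFree w := by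
  have hm : 0 < m := by
    rcases Nat.eq_zero_or_pos m with h | h
    · simp [h] at hgm; omega
    · exact h
  haveI : NeZero m := ⟨hm.ne'⟩
  have key : ∀ S : Finset (Fin d),
      (∑ j ∈ S, ((g * (w j).val : ℕ) : ZMod n)) = 0 ↔ (∑ j ∈ S, w j) = 0 := by
    intro S
    have h1 : (∑ j ∈ S, ((g * (w j).val : ℕ) : ZMod n))
        = ((g * ∑ j ∈ S, (w j).val : ℕ) : ZMod n) := by
      push_cast
      rw [Finset.mul_sum]
    rw [h1, zsf_cast_zero_iff hgm hn]
    have h2 : ((∑ j ∈ S, (w j).val : ℕ) : ZMod m) = ∑ j ∈ S, w j := by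
      push_cast
      simp [ZMod.natCast_zmod_val]
    rw [h2]
  constructor
  · intro h S hS hzero
    exact h S hS ((key S).mpr hzero)
  · intro h S hS hzero
    exact h S hS ((key S).mp hzero)

private lemma lift_val {n m g : ℕ} (hgm : g * m = n) (hn : 0 < n) (w : ZMod m) :
    (((g * w.val : ℕ) : ZMod n)).val = g * w.val := by
  have hm : 0 < m := by
    rcases Nat.eq_zero_or_pos m with h | h
    · simp [h] at hgm; omega
    · exact h
  haveI : NeZero m := ⟨hm.ne'⟩
  haveI : NeZero n := ⟨hn.ne'⟩
  have hg : 0 < g := by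
    rcases Nat.eq_zero_or_pos g with h | h
    · simp [h] at hgm; omega
    · exact h
  apply ZMod.val_cast_of_lt
  calc g * w.val < g * m := (Nat.mul_lt_mul_left hg).mpr (ZMod.val_lt w)
    _ = n := hgm

private lemma gcd_normalize_mul {g : ℕ} {d : ℕ} (f : Fin d → ℕ) :
    (Finset.univ.gcd fun j => g * f j) = g * Finset.univ.gcd f := by
  rw [Finset.gcd_mul_left]
  simp

private lemma alpha_eq_sum_beta (n d : ℕ) (hn : 0 < n) :
    alphaZSF n d = ∑ m ∈ n.divisors, betaZSF m d := by
  classical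
  haveI : NeZero n := ⟨hn.ne'⟩
  -- notation
  set G : (Fin d → ZMod n) → ℕ := fun v => Nat.gcd (Finset.univ.gcd fun i => (v i).val) n with hG
  have hGdvd : ∀ v, G v ∣ n := fun v => Nat.gcd_dvd_right _ _
  have hGpos : ∀ v, 0 < G v := fun v => Nat.pos_of_ne_zero (fun h => by
    have := Nat.eq_zero_of_gcd_eq_zero_right h
    omega)
  have hα : alphaZSF n d
      = (Finset.univ.filter fun v : Fin d → ZMod n => ZeroSumFree v).card := by
    rw [alphaZSF, Nat.card_eq_fintype_card, Fintype.card_subtype]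
  rw [hα, Finset.card_eq_sum_card_fiberwise
    (f := fun v : Fin d → ZMod n => n / G v) (t := n.divisors) ?side]
  case side =>
    intro v _
    rw [Finset.mem_coe, Nat.mem_divisors]
    exact ⟨Nat.div_dvd_of_dvd (hGdvd v), hn.ne'⟩
  apply Finset.sum_congr rfl
  intro m hm
  rw [Nat.mem_divisors] at hm
  obtain ⟨hmdvd, -⟩ := hm
  have hm0 : 0 < m := Nat.pos_of_dvd_of_pos hmdvd hn
  haveI : NeZero m := ⟨hm0.ne'⟩
  set g : ℕ := n / m with hgdef
  have hgm : g * m = n := Nat.div_mul_cancel hmdvd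
  have hg0 : 0 < g := by
    rcases Nat.eq_zero_or_pos g with h | h
    · rw [h, zero_mul] at hgm; omega
    · exact h
  -- the fiber condition is equivalent to G v = g
  have hfib : ∀ v : Fin d → ZMod n, n / G v = m ↔ G v = g := by
    intro v
    constructor
    · intro h
      rw [hgdef, ← h, Nat.div_div_self (hGdvd v) hn.ne']
    · intro h
      rw [h, hgdef, Nat.div_div_self hmdvd hn.ne']
  have hβ : betaZSF m d = (Finset.univ.filter
      fun w : Fin d → ZMod m => ZeroSumFree w ∧ IrreducibleTuple w).card := by
    rw [betaZSF, Nat.card_eq_fintype_card, Fintype.card_subtype]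
  rw [hβ]
  symm
  apply Finset.card_nbij'
    (i := fun w : Fin d → ZMod m => fun j => ((g * (w j).val : ℕ) : ZMod n))
    (j := fun v : Fin d → ZMod n => fun j => (((v j).val / g : ℕ) : ZMod m))
  · -- forward membership
    intro w hw
    simp only [Finset.mem_coe, Finset.mem_filter, Finset.mem_univ, true_and] at hw ⊢
    obtain ⟨hzsf, hirr⟩ := hw
    have hGw : G (fun j => ((g * (w j).val : ℕ) : ZMod n)) = g := by
      rw [hG]
      simp only
      have : (Finset.univ.gcd fun j => (((g * (w j).val : ℕ) : ZMod n)).val)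
          = Finset.univ.gcd fun j => g * (w j).val := by
        apply Finset.gcd_congr rfl
        intro j _
        exact lift_val hgm hn (w j)
      rw [this, gcd_normalize_mul, ← hgm, Nat.gcd_mul_left]
      rw [IrreducibleTuple] at hirr
      rw [hirr, mul_one]
    refine ⟨(zsf_lift hgm hn w).mpr hzsf, ?_⟩
    rw [hfib]
    exact hGw
  · -- backward membership
    intro v hv
    simp only [Finset.mem_coe, Finset.mem_filter, Finset.mem_univ, true_and] at hv ⊢
    obtain ⟨hzsf, hfv⟩ := hv
    have hGv : G v = g := (hfib v).mp hfv
    have hdvdval : ∀ j, g ∣ (v j).val := by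
      intro j
      have h1 : G v ∣ Finset.univ.gcd fun i => (v i).val := Nat.gcd_dvd_left _ _
      have h2 : (Finset.univ.gcd fun i => (v i).val) ∣ (v j).val :=
        Finset.gcd_dvd (Finset.mem_univ j)
      rw [hGv] at h1
      exact h1.trans h2
    have hvval : ∀ j, ((((v j).val / g : ℕ) : ZMod m)).val = (v j).val / g := by
      intro j
      apply ZMod.val_cast_of_lt
      rw [Nat.div_lt_iff_lt_mul hg0]
      calc (v j).val < n := ZMod.val_lt (v j)
        _ = m * g := by rw [mul_comm]; exact hgm.symm
    have hlift : ∀ j, ((g * ((((v j).val / g : ℕ) : ZMod m)).val : ℕ) : ZMod n) = v j := by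
      intro j
      rw [hvval j, Nat.mul_div_cancel' (hdvdval j)]
      exact ZMod.natCast_zmod_val (v j)
    constructor
    · -- ZeroSumFree
      have := (zsf_lift hgm hn (fun j => (((v j).val / g : ℕ) : ZMod m)))
      rw [show (fun j => ((g * (((((v j).val / g : ℕ) : ZMod m))).val : ℕ) : ZMod n)) = v
        from funext hlift] at this
      exact this.mp hzsf
    · -- Irreducible
      rw [IrreducibleTuple]
      have hkey : g * Nat.gcd (Finset.univ.gcd fun j =>
          ((((v j).val / g : ℕ) : ZMod m)).val) m = g * 1 := by
        rw [← Nat.gcd_mul_left, ← gcd_normalize_mul, mul_one]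
        have : (Finset.univ.gcd fun j => g * ((((v j).val / g : ℕ) : ZMod m)).val)
            = Finset.univ.gcd fun i => (v i).val := by
          apply Finset.gcd_congr rfl
          intro j _
          rw [hvval j, Nat.mul_div_cancel' (hdvdval j)]
        rw [this, hgm]
        exact hGv
      exact Nat.eq_of_mul_eq_mul_left hg0 hkey
  · -- left inverse
    intro w hw
    funext j
    have h1 : (((g * (w j).val : ℕ) : ZMod n)).val = g * (w j).val := lift_val hgm hn (w j)
    simp only [h1]
    rw [Nat.mul_div_cancel_left _ hg0]
    exact ZMod.natCast_zmod_val (w j)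
  · -- right inverse
    intro v hv
    simp only [Finset.mem_coe, Finset.mem_filter, Finset.mem_univ, true_and] at hv
    obtain ⟨hzsf, hfv⟩ := hv
    have hGv : G v = g := (hfib v).mp hfv
    have hdvdval : ∀ j, g ∣ (v j).val := by
      intro j
      have h1 : G v ∣ Finset.univ.gcd fun i => (v i).val := Nat.gcd_dvd_left _ _
      have h2 : (Finset.univ.gcd fun i => (v i).val) ∣ (v j).val :=
        Finset.gcd_dvd (Finset.mem_univ j)
      rw [hGv] at h1
      exact h1.trans h2
    funext j
    have hvval : ((((v j).val / g : ℕ) : ZMod m)).val = (v j).val / g := by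
      apply ZMod.val_cast_of_lt
      rw [Nat.div_lt_iff_lt_mul hg0]
      calc (v j).val < n := ZMod.val_lt (v j)
        _ = m * g := by rw [mul_comm]; exact hgm.symm
    simp only [hvval]
    rw [Nat.mul_div_cancel' (hdvdval j)]
    exact ZMod.natCast_zmod_val (v j)

open ArithmeticFunction ArithmeticFunction.Moebius in
theorem beta_eq_moebius_sum_alpha (n d : ℕ) (hn : 3 ≤ n) (hd1 : 1 ≤ d) (hdn : d < n) :
    (betaZSF n d : ℤ) = ∑ m ∈ n.divisors, μ (n / m) * (alphaZSF m d : ℤ) := by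
  have key : ∀ k > 0, ∑ i ∈ k.divisors, (betaZSF i d : ℤ) = (alphaZSF k d : ℤ) := by
    intro k hk
    rw [alpha_eq_sum_beta k d hk]
    push_cast
    rfl
  have := (sum_eq_iff_sum_smul_moebius_eq (R := ℤ)
    (f := fun i => (betaZSF i d : ℤ)) (g := fun i => (alphaZSF i d : ℤ))).mp key n (by omega)
  rw [← this, Nat.sum_divisorsAntidiagonal' (f := fun x y => (μ x : ℤ) • (alphaZSF y d : ℤ))]
  simp [zsmul_eq_mul]
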